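/- arXiv:1611.09351 — 15 statements merged into one kernel-verified Lean document; each statement's English description precedes it below -/
import Mathlib

section
/- Let P be a probability measure on a measurable space Ω and let E, H be measurable events with P(E ∩ H) > 0 and P(Eᶜ ∩ H) > 0. For any real number l, the single-likelihood Adams conditioning Q_l of P at (l, E, H) satisfies Q_l(H) = P(H) and Q_l(Hᶜ) = P(Hᶜ); that is, Adams conditioning on the likelihood of E given H leaves the prior probability of H unchanged. -/
open MeasureTheory Set

variable {Ω : Type*} [MeasurableSpace Ω]

/-- Real-valued probability of an event. -/
noncomputable def pr (P : MeasureTheory.Measure Ω) : Set Ω → ℝ := fun A => (P A).toReal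

/-- Conditional probability `Q⁰(A|B) = Q(A ∩ B)/Q(B)` of a set function (with `x/0 = 0`). -/
noncomputable def cond0 (Q : Set Ω → ℝ) (A B : Set Ω) : ℝ := Q (A ∩ B) / Q B

/-- Single-likelihood Adams conditioning of the set function `Q` at `(l, E, H)`. -/
noncomputable def slac (Q : Set Ω → ℝ) (l : ℝ) (E H : Set Ω) : Set Ω → ℝ :=
  fun x => Q (H ∩ E ∩ x) * (l / cond0 Q E H)
    + Q (H ∩ Eᶜ ∩ x) * ((1 - l) / cond0 Q Eᶜ H)
    + Q (Hᶜ ∩ x)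

/-- Double-likelihood Adams conditioning of the set function `Q` at `(l, l', E, H)`. -/
noncomputable def dlac (Q : Set Ω → ℝ) (l l' : ℝ) (E H : Set Ω) : Set Ω → ℝ :=
  fun x => Q (H ∩ E ∩ x) * (l / cond0 Q E H)
    + Q (H ∩ Eᶜ ∩ x) * ((1 - l) / cond0 Q Eᶜ H)
    + Q (Hᶜ ∩ E ∩ x) * (l' / cond0 Q E Hᶜ)
    + Q (Hᶜ ∩ Eᶜ ∩ x) * ((1 - l') / cond0 Q Eᶜ Hᶜ)

theorem stmt_0 (P : MeasureTheory.Measure Ω) [IsProbabilityMeasure P]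
    (E H : Set Ω) (hE : MeasurableSet E) (hH : MeasurableSet H)
    (hEH : 0 < pr P (E ∩ H)) (hEcH : 0 < pr P (Eᶜ ∩ H)) (l : ℝ) :
    slac (pr P) l E H H = pr P H ∧ slac (pr P) l E H Hᶜ = pr P Hᶜ := by
  have hPH : 0 < pr P H := hEH.trans_le (ENNReal.toReal_mono (measure_ne_top P H) (measure_mono inter_subset_right))
  have hempty : pr P ∅ = 0 := by simp [pr]
  constructor
  · have h1 : H ∩ E ∩ H = E ∩ H := by ext x; simp; tauto
    have h2 : H ∩ Eᶜ ∩ H = Eᶜ ∩ H := by ext x; simp; tauto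
    have h3 : Hᶜ ∩ H = (∅ : Set Ω) := compl_inter_self H
    simp only [slac, cond0, h1, h2, h3, hempty]
    field_simp
    ring
  · have h1 : H ∩ E ∩ Hᶜ = (∅ : Set Ω) := by ext x; simp; tauto
    have h2 : H ∩ Eᶜ ∩ Hᶜ = (∅ : Set Ω) := by ext x; simp; tauto
    have h3 : Hᶜ ∩ Hᶜ = Hᶜ := inter_self _
    simp only [slac, cond0, h1, h2, h3, hempty]
    ring
end

section
/- Let P be a probability measure on a measurable space Ω and let E, H be measurable events with P(E ∩ H) > 0 and P(Eᶜ ∩ H) > 0. For any real number l, the single-likelihood Adams conditioning Q_l of P at (l, E, H) satisfies Q_l⁰(E|H) = l, i.e. Adams conditioning installs exactly the target likelihood l for E given H. -/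
open MeasureTheory Set

variable {Ω : Type*} [MeasurableSpace Ω]

theorem stmt_2 (P : MeasureTheory.Measure Ω) [IsProbabilityMeasure P]
    (E H : Set Ω) (hE : MeasurableSet E) (hH : MeasurableSet H)
    (hEH : 0 < pr P (E ∩ H)) (hEcH : 0 < pr P (Eᶜ ∩ H)) (l : ℝ) :
    cond0 (slac (pr P) l E H) E H = l := by
  have hmono : ∀ A B : Set Ω, A ⊆ B → pr P A ≤ pr P B := by
    intro A B hAB
    exact ENNReal.toReal_mono (measure_ne_top P B) (measure_mono hAB)
  have hQH : 0 < pr P H := lt_of_lt_of_le hEH (hmono _ _ inter_subset_right)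
  have hempty : pr P ∅ = 0 := by simp [pr]
  have h1 : H ∩ E ∩ (E ∩ H) = E ∩ H := by ext x; constructor <;> (intro h; simp_all)
  have h2 : H ∩ Eᶜ ∩ (E ∩ H) = ∅ := by ext x; simp; tauto
  have h3 : Hᶜ ∩ (E ∩ H) = ∅ := by ext x; simp; tauto
  have h4 : H ∩ E ∩ H = E ∩ H := by ext x; simp; tauto
  have h5 : H ∩ Eᶜ ∩ H = Eᶜ ∩ H := by ext x; simp; tauto
  have h6 : Hᶜ ∩ H = ∅ := by ext x; simp
  have hc : cond0 (pr P) E H = pr P (E ∩ H) / pr P H := rfl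
  have hc' : cond0 (pr P) Eᶜ H = pr P (Eᶜ ∩ H) / pr P H := rfl
  have key1 : pr P (E ∩ H) * (l / (pr P (E ∩ H) / pr P H)) = l * pr P H := by
    field_simp
  have key2 : pr P (Eᶜ ∩ H) * ((1 - l) / (pr P (Eᶜ ∩ H) / pr P H)) = (1 - l) * pr P H := by
    field_simp
  simp only [cond0, slac, h1, h2, h3, h4, h5, h6, hempty, hc, hc', key1, key2,
    zero_mul, add_zero]
  rw [show l * pr P H + (1 - l) * pr P H = pr P H by ring,
    mul_div_assoc, div_self (ne_of_gt hQH), mul_one]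
end

section
/- Let P be a probability measure on a measurable space Ω and let E, H be measurable events with P(E ∩ H) > 0, P(Eᶜ ∩ H) > 0 and P(Hᶜ) > 0. For any real number l, the single-likelihood Adams conditioning Q_l of P at (l, E, H) satisfies Q_l⁰(E|Hᶜ) = P⁰(E|Hᶜ) and Q_l⁰(Eᶜ|Hᶜ) = P⁰(Eᶜ|Hᶜ); that is, Adams conditioning on the likelihood of E given H leaves the likelihoods of E and of Eᶜ given Hᶜ unchanged. -/
open MeasureTheory Set

variable {Ω : Type*} [MeasurableSpace Ω]

theorem stmt_3 (P : MeasureTheory.Measure Ω) [IsProbabilityMeasure P]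
    (E H : Set Ω) (hE : MeasurableSet E) (hH : MeasurableSet H)
    (hEH : 0 < pr P (E ∩ H)) (hEcH : 0 < pr P (Eᶜ ∩ H)) (hHc : 0 < pr P Hᶜ) (l : ℝ) :
    cond0 (slac (pr P) l E H) E Hᶜ = cond0 (pr P) E Hᶜ ∧
    cond0 (slac (pr P) l E H) Eᶜ Hᶜ = cond0 (pr P) Eᶜ Hᶜ := by
  have key : ∀ x : Set Ω, x ⊆ Hᶜ → slac (pr P) l E H x = pr P x := by
    intro x hx
    have h1 : H ∩ E ∩ x = ∅ := by
      ext a; simp only [mem_inter_iff, mem_empty_iff_false, iff_false]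
      rintro ⟨⟨ha, _⟩, hax⟩; exact hx hax ha
    have h2 : H ∩ Eᶜ ∩ x = ∅ := by
      ext a; simp only [mem_inter_iff, mem_empty_iff_false, iff_false]
      rintro ⟨⟨ha, _⟩, hax⟩; exact hx hax ha
    have h3 : Hᶜ ∩ x = x := inter_eq_self_of_subset_right hx
    have h0 : pr P ∅ = 0 := by simp [pr]
    simp [slac, h1, h2, h3, h0]
  constructor <;>
  · simp only [cond0, key _ inter_subset_right, key _ (subset_refl _)]
end

section
/- Let P be a probability measure on a measurable space Ω and let E, H be measurable events with P(E ∩ H) > 0, P(Eᶜ ∩ H) > 0, P(E ∩ Hᶜ) > 0 and P(Eᶜ ∩ Hᶜ) > 0. Let l, l′ be real numbers, let Q_l be the single-likelihood Adams conditioning of P at (l, E, H), and let R be the single-likelihood Adams conditioning of the set function Q_l at (l′, E, Hᶜ). Then R⁰(E|H) = l. -/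
open MeasureTheory Set

variable {Ω : Type*} [MeasurableSpace Ω]

theorem stmt_4 (P : MeasureTheory.Measure Ω) [IsProbabilityMeasure P]
    (E H : Set Ω) (hE : MeasurableSet E) (hH : MeasurableSet H)
    (hEH : 0 < pr P (E ∩ H)) (hEcH : 0 < pr P (Eᶜ ∩ H))
    (hEHc : 0 < pr P (E ∩ Hᶜ)) (hEcHc : 0 < pr P (Eᶜ ∩ Hᶜ)) (l l' : ℝ) :
    cond0 (slac (slac (pr P) l E H) l' E Hᶜ) E H = l := by
  have hHpos : 0 < pr P H := lt_of_lt_of_le hEH (by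
    unfold pr
    exact ENNReal.toReal_le_toReal (measure_ne_top P _) (measure_ne_top P _) |>.mpr
      (measure_mono inter_subset_right))
  have e1 : Hᶜ ∩ E ∩ (E ∩ H) = (∅ : Set Ω) := by ext x; simp; tauto
  have e2 : Hᶜ ∩ Eᶜ ∩ (E ∩ H) = (∅ : Set Ω) := by ext x; simp; tauto
  have e3 : Hᶜᶜ ∩ (E ∩ H) = E ∩ H := by ext x; simp
  have e4 : Hᶜ ∩ E ∩ H = (∅ : Set Ω) := by ext x; simp; tauto
  have e5 : Hᶜ ∩ Eᶜ ∩ H = (∅ : Set Ω) := by ext x; simp; tauto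
  have e6 : Hᶜᶜ ∩ H = H := by ext x; simp
  have f1 : H ∩ E ∩ (E ∩ H) = E ∩ H := by ext x; simp; tauto
  have f2 : H ∩ Eᶜ ∩ (E ∩ H) = (∅ : Set Ω) := by ext x; simp; tauto
  have f3 : Hᶜ ∩ (E ∩ H) = (∅ : Set Ω) := by ext x; simp; tauto
  have f4 : H ∩ E ∩ H = E ∩ H := by ext x; simp; tauto
  have f5 : H ∩ Eᶜ ∩ H = Eᶜ ∩ H := by ext x; simp; tauto
  have f6 : Hᶜ ∩ H = (∅ : Set Ω) := by ext x; simp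
  have hpe : pr P (∅ : Set Ω) = 0 := by simp [pr]
  have Qempty : slac (pr P) l E H ∅ = 0 := by simp [slac, hpe]
  have QEH : slac (pr P) l E H (E ∩ H) = l * pr P H := by
    simp only [slac, f1, f2, f3, hpe, cond0]
    field_simp
    ring
  have QH : slac (pr P) l E H H = pr P H := by
    simp only [slac, f4, f5, f6, hpe, cond0]
    field_simp
    ring
  set Q' := slac (pr P) l E H with hQ'
  have REH : slac Q' l' E Hᶜ (E ∩ H) = l * pr P H := by
    rw [slac]; rw [e1, e2, e3, Qempty, QEH]; ring
  have RH : slac Q' l' E Hᶜ H = pr P H := by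
    rw [slac]; rw [e4, e5, e6, Qempty, QH]; ring
  rw [cond0, REH, RH, mul_div_assoc, div_self (ne_of_gt hHpos), mul_one]
end

section
/- Let P be a probability measure on a measurable space Ω and let E, H be measurable events with P(E ∩ H) > 0, P(Eᶜ ∩ H) > 0, P(E ∩ Hᶜ) > 0 and P(Eᶜ ∩ Hᶜ) > 0. Let l, l′ be real numbers, let Q_l be the single-likelihood Adams conditioning of P at (l, E, H), and let R be the single-likelihood Adams conditioning of the set function Q_l at (l′, E, Hᶜ). Then R⁰(E|Hᶜ) = l′. -/
open MeasureTheory Set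

variable {Ω : Type*} [MeasurableSpace Ω]

theorem stmt_5 (P : MeasureTheory.Measure Ω) [IsProbabilityMeasure P]
    (E H : Set Ω) (hE : MeasurableSet E) (hH : MeasurableSet H)
    (hEH : 0 < pr P (E ∩ H)) (hEcH : 0 < pr P (Eᶜ ∩ H))
    (hEHc : 0 < pr P (E ∩ Hᶜ)) (hEcHc : 0 < pr P (Eᶜ ∩ Hᶜ)) (l l' : ℝ) :
    cond0 (slac (slac (pr P) l E H) l' E Hᶜ) E Hᶜ = l' := by
  set Q := slac (pr P) l E H with hQ
  have prempty : pr P ∅ = 0 := by simp [pr]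
  have hQempty : Q ∅ = 0 := by simp [hQ, slac, prempty]
  have hQEHc : Q (E ∩ Hᶜ) = pr P (E ∩ Hᶜ) := by
    have h1 : H ∩ E ∩ (E ∩ Hᶜ) = ∅ := by ext x; simp; try tauto
    have h2 : H ∩ Eᶜ ∩ (E ∩ Hᶜ) = ∅ := by ext x; simp; try tauto
    have h3 : Hᶜ ∩ (E ∩ Hᶜ) = E ∩ Hᶜ := by ext x; simp; try tauto
    simp [hQ, slac, h1, h2, h3, prempty]
  have hQEcHc : Q (Eᶜ ∩ Hᶜ) = pr P (Eᶜ ∩ Hᶜ) := by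
    have h1 : H ∩ E ∩ (Eᶜ ∩ Hᶜ) = ∅ := by ext x; simp; try tauto
    have h2 : H ∩ Eᶜ ∩ (Eᶜ ∩ Hᶜ) = ∅ := by ext x; simp; try tauto
    have h3 : Hᶜ ∩ (Eᶜ ∩ Hᶜ) = Eᶜ ∩ Hᶜ := by ext x; simp; try tauto
    simp [hQ, slac, h1, h2, h3, prempty]
  have hQHc : Q Hᶜ = pr P Hᶜ := by
    have h1 : H ∩ E ∩ Hᶜ = ∅ := by ext x; simp; try tauto
    have h2 : H ∩ Eᶜ ∩ Hᶜ = ∅ := by ext x; simp; try tauto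
    have h3 : Hᶜ ∩ Hᶜ = Hᶜ := by ext x; simp
    simp [hQ, slac, h1, h2, h3, prempty]
  set a := pr P (E ∩ Hᶜ) with ha
  set b := pr P (Eᶜ ∩ Hᶜ) with hb
  set h := pr P Hᶜ with hh
  have hapos : 0 < a := hEHc
  have hbpos : 0 < b := hEcHc
  have hhpos : 0 < h := by
    have hle : P (E ∩ Hᶜ) ≤ P Hᶜ := measure_mono (inter_subset_right)
    have : a ≤ h := ENNReal.toReal_le_toReal (measure_ne_top _ _) (measure_ne_top _ _) |>.mpr hle
    linarith
  -- sets for the outer slac at x = E ∩ Hᶜ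
  have s1 : Hᶜ ∩ E ∩ (E ∩ Hᶜ) = E ∩ Hᶜ := by ext x; simp; try tauto
  have s2 : Hᶜ ∩ Eᶜ ∩ (E ∩ Hᶜ) = ∅ := by ext x; simp; try tauto
  have s3 : Hᶜᶜ ∩ (E ∩ Hᶜ) = ∅ := by ext x; simp; try tauto
  -- sets for the outer slac at x = Hᶜ
  have t1 : Hᶜ ∩ E ∩ Hᶜ = E ∩ Hᶜ := by ext x; simp; try tauto
  have t2 : Hᶜ ∩ Eᶜ ∩ Hᶜ = Eᶜ ∩ Hᶜ := by ext x; simp; try tauto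
  have t3 : Hᶜᶜ ∩ Hᶜ = ∅ := by ext x; simp
  have c1 : cond0 Q E Hᶜ = a / h := by rw [cond0, hQEHc, hQHc]
  have c2 : cond0 Q Eᶜ Hᶜ = b / h := by rw [cond0, hQEcHc, hQHc]
  rw [cond0]
  simp only [slac]
  simp only [s1, s2, s3, t1, t2, t3, hQempty, hQEHc, hQEcHc, c1, c2, ← ha, ← hb]
  field_simp
  have : l' * h + (1 - l') * h = h := by ring
  rw [show h * (l' + (1 - l')) + 0 = h by ring, show h * (l' * b + 0 * (1 - l')) + 0 * b = l' * b * h by ring, mul_div_assoc, div_self hhpos.ne', mul_one]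
end

section
/- Let P be a probability measure on a measurable space Ω and let E, H be measurable events with P(E ∩ H) > 0, P(Eᶜ ∩ H) > 0, P(E ∩ Hᶜ) > 0 and P(Eᶜ ∩ Hᶜ) > 0. Let l, l′ be real numbers, let Q_l be the single-likelihood Adams conditioning of P at (l, E, H), and let R be the single-likelihood Adams conditioning of the set function Q_l at (l′, E, Hᶜ). Then for every measurable set x, R(x) = P(Hᶜ ∩ E ∩ x)·(l′ / P⁰(E|Hᶜ)) + P(Hᶜ ∩ Eᶜ ∩ x)·((1 − l′) / P⁰(Eᶜ|Hᶜ)) + P(H ∩ E ∩ x)·(l / P⁰(E|H)) + P(H ∩ Eᶜ ∩ x)·((1 − l) / P⁰(Eᶜ|H)); that is, the composition of the two single-likelihood Adams conditioning steps equals double-likelihood Adams conditioning of P at (l, l′, E, H). -/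
open MeasureTheory Set

variable {Ω : Type*} [MeasurableSpace Ω]

theorem stmt_6 (P : MeasureTheory.Measure Ω) [IsProbabilityMeasure P]
    (E H : Set Ω) (hE : MeasurableSet E) (hH : MeasurableSet H)
    (hEH : 0 < pr P (E ∩ H)) (hEcH : 0 < pr P (Eᶜ ∩ H))
    (hEHc : 0 < pr P (E ∩ Hᶜ)) (hEcHc : 0 < pr P (Eᶜ ∩ Hᶜ)) (l l' : ℝ) :
    ∀ x : Set Ω, MeasurableSet x →
      slac (slac (pr P) l E H) l' E Hᶜ x =
        pr P (Hᶜ ∩ E ∩ x) * (l' / cond0 (pr P) E Hᶜ)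
        + pr P (Hᶜ ∩ Eᶜ ∩ x) * ((1 - l') / cond0 (pr P) Eᶜ Hᶜ)
        + pr P (H ∩ E ∩ x) * (l / cond0 (pr P) E H)
        + pr P (H ∩ Eᶜ ∩ x) * ((1 - l) / cond0 (pr P) Eᶜ H) := by
  intro x hx
  have hp : pr P ∅ = 0 := by simp [pr]
  simp only [slac, cond0, compl_compl]
  rw [show H ∩ E ∩ (Hᶜ ∩ E ∩ x) = ∅ from by ext a; simp only [mem_inter_iff, mem_compl_iff, mem_empty_iff_false]; tauto,
    show H ∩ Eᶜ ∩ (Hᶜ ∩ E ∩ x) = ∅ from by ext a; simp only [mem_inter_iff, mem_compl_iff, mem_empty_iff_false]; tauto,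
    show Hᶜ ∩ (Hᶜ ∩ E ∩ x) = Hᶜ ∩ E ∩ x from by ext a; simp only [mem_inter_iff, mem_compl_iff]; tauto,
    show H ∩ E ∩ (Hᶜ ∩ Eᶜ ∩ x) = ∅ from by ext a; simp only [mem_inter_iff, mem_compl_iff, mem_empty_iff_false]; tauto,
    show H ∩ Eᶜ ∩ (Hᶜ ∩ Eᶜ ∩ x) = ∅ from by ext a; simp only [mem_inter_iff, mem_compl_iff, mem_empty_iff_false]; tauto,
    show Hᶜ ∩ (Hᶜ ∩ Eᶜ ∩ x) = Hᶜ ∩ Eᶜ ∩ x from by ext a; simp only [mem_inter_iff, mem_compl_iff]; tauto,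
    show H ∩ E ∩ (E ∩ Hᶜ) = ∅ from by ext a; simp only [mem_inter_iff, mem_compl_iff, mem_empty_iff_false]; tauto,
    show H ∩ Eᶜ ∩ (E ∩ Hᶜ) = ∅ from by ext a; simp only [mem_inter_iff, mem_compl_iff, mem_empty_iff_false]; tauto,
    show Hᶜ ∩ (E ∩ Hᶜ) = E ∩ Hᶜ from by ext a; simp only [mem_inter_iff, mem_compl_iff]; tauto,
    show H ∩ E ∩ (Eᶜ ∩ Hᶜ) = ∅ from by ext a; simp only [mem_inter_iff, mem_compl_iff, mem_empty_iff_false]; tauto,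
    show H ∩ Eᶜ ∩ (Eᶜ ∩ Hᶜ) = ∅ from by ext a; simp only [mem_inter_iff, mem_compl_iff, mem_empty_iff_false]; tauto,
    show Hᶜ ∩ (Eᶜ ∩ Hᶜ) = Eᶜ ∩ Hᶜ from by ext a; simp only [mem_inter_iff, mem_compl_iff]; tauto,
    show H ∩ E ∩ Hᶜ = ∅ from by ext a; simp only [mem_inter_iff, mem_compl_iff, mem_empty_iff_false]; tauto,
    show H ∩ Eᶜ ∩ Hᶜ = ∅ from by ext a; simp only [mem_inter_iff, mem_compl_iff, mem_empty_iff_false]; tauto,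
    show Hᶜ ∩ Hᶜ = Hᶜ from by ext a; simp only [mem_inter_iff, mem_compl_iff]; tauto,
    show H ∩ E ∩ (H ∩ x) = H ∩ E ∩ x from by ext a; simp only [mem_inter_iff]; tauto,
    show H ∩ Eᶜ ∩ (H ∩ x) = H ∩ Eᶜ ∩ x from by ext a; simp only [mem_inter_iff, mem_compl_iff]; tauto,
    show Hᶜ ∩ (H ∩ x) = ∅ from by ext a; simp only [mem_inter_iff, mem_compl_iff, mem_empty_iff_false]; tauto,
    hp]
  ring
end

section
/- Let P be a probability measure on a measurable space Ω and let E, H be measurable events with P(E ∩ H) > 0, P(Eᶜ ∩ H) > 0, P(E ∩ Hᶜ) > 0 and P(Eᶜ ∩ Hᶜ) > 0. Let l, l′ be real numbers, let Q_l be the single-likelihood Adams conditioning of P at (l, E, H), and let R be the single-likelihood Adams conditioning of the set function Q_l at (l′, E, Hᶜ). Then R(E) = l′·(1 − P(H)) + l·P(H). -/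
open MeasureTheory Set

variable {Ω : Type*} [MeasurableSpace Ω]

theorem stmt_7 (P : MeasureTheory.Measure Ω) [IsProbabilityMeasure P]
    (E H : Set Ω) (hE : MeasurableSet E) (hH : MeasurableSet H)
    (hEH : 0 < pr P (E ∩ H)) (hEcH : 0 < pr P (Eᶜ ∩ H))
    (hEHc : 0 < pr P (E ∩ Hᶜ)) (hEcHc : 0 < pr P (Eᶜ ∩ Hᶜ)) (l l' : ℝ) :
    slac (slac (pr P) l E H) l' E Hᶜ E = l' * (1 - pr P H) + l * pr P H := by

  have hpr0 : pr P (∅ : Set Ω) = 0 := by simp [pr]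
  have hsplit : ∀ s : Set Ω, pr P (E ∩ s) + pr P (Eᶜ ∩ s) = pr P s := by
    intro s
    have h := measure_inter_add_diff (μ := P) s hE
    have h1 : s ∩ E = E ∩ s := inter_comm _ _
    have h2 : s \ E = Eᶜ ∩ s := by ext x; simp [mem_diff]; tauto
    rw [h1, h2] at h
    simp only [pr]
    rw [← ENNReal.toReal_add (measure_ne_top _ _) (measure_ne_top _ _), h]
  have hcompl : pr P H + pr P Hᶜ = 1 := by
    simp only [pr]
    rw [← ENNReal.toReal_add (measure_ne_top _ _) (measure_ne_top _ _),
      measure_add_measure_compl hH]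
    simp
  have hpH : 0 < pr P H := by
    have := hsplit H; nlinarith
  have hpHc : 0 < pr P Hᶜ := by
    have := hsplit Hᶜ; nlinarith
  set Q := slac (pr P) l E H with hQdef
  have hQHc : Q Hᶜ = pr P Hᶜ := by
    simp only [hQdef, slac]
    have h1 : H ∩ E ∩ Hᶜ = ∅ := by ext x; simp only [mem_inter_iff, mem_compl_iff, mem_empty_iff_false, iff_false, not_and]; tauto
    have h2 : H ∩ Eᶜ ∩ Hᶜ = ∅ := by ext x; simp only [mem_inter_iff, mem_compl_iff, mem_empty_iff_false, iff_false, not_and]; tauto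
    have h3 : Hᶜ ∩ Hᶜ = Hᶜ := inter_self _
    rw [h1, h2, h3, hpr0]; ring
  have hQEHc : Q (E ∩ Hᶜ) = pr P (E ∩ Hᶜ) := by
    simp only [hQdef, slac]
    have h1 : H ∩ E ∩ (E ∩ Hᶜ) = ∅ := by ext x; simp only [mem_inter_iff, mem_compl_iff, mem_empty_iff_false, iff_false, not_and]; tauto
    have h2 : H ∩ Eᶜ ∩ (E ∩ Hᶜ) = ∅ := by ext x; simp only [mem_inter_iff, mem_compl_iff, mem_empty_iff_false, iff_false, not_and]; tauto
    have h3 : Hᶜ ∩ (E ∩ Hᶜ) = E ∩ Hᶜ := by ext x; simp only [mem_inter_iff, mem_compl_iff, mem_empty_iff_false, iff_false, not_and]; tauto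
    rw [h1, h2, h3, hpr0]; ring
  have hQ1 : Q (Hᶜ ∩ E ∩ E) = pr P (E ∩ Hᶜ) := by
    simp only [hQdef, slac]
    have h1 : H ∩ E ∩ (Hᶜ ∩ E ∩ E) = ∅ := by ext x; simp only [mem_inter_iff, mem_compl_iff, mem_empty_iff_false, iff_false, not_and]; tauto
    have h2 : H ∩ Eᶜ ∩ (Hᶜ ∩ E ∩ E) = ∅ := by ext x; simp only [mem_inter_iff, mem_compl_iff, mem_empty_iff_false, iff_false, not_and]; tauto
    have h3 : Hᶜ ∩ (Hᶜ ∩ E ∩ E) = E ∩ Hᶜ := by ext x; simp only [mem_inter_iff, mem_compl_iff, mem_empty_iff_false, iff_false, not_and]; tauto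
    rw [h1, h2, h3, hpr0]; ring
  have hQ2 : Q (Hᶜ ∩ Eᶜ ∩ E) = 0 := by
    simp only [hQdef, slac]
    have h1 : H ∩ E ∩ (Hᶜ ∩ Eᶜ ∩ E) = ∅ := by ext x; simp only [mem_inter_iff, mem_compl_iff, mem_empty_iff_false, iff_false, not_and]; tauto
    have h2 : H ∩ Eᶜ ∩ (Hᶜ ∩ Eᶜ ∩ E) = ∅ := by ext x; simp only [mem_inter_iff, mem_compl_iff, mem_empty_iff_false, iff_false, not_and]; tauto
    have h3 : Hᶜ ∩ (Hᶜ ∩ Eᶜ ∩ E) = ∅ := by ext x; simp only [mem_inter_iff, mem_compl_iff, mem_empty_iff_false, iff_false, not_and]; tauto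
    rw [h1, h2, h3, hpr0]; ring
  have hQ3 : Q (Hᶜᶜ ∩ E) = pr P (E ∩ H) * (l / (pr P (E ∩ H) / pr P H)) := by
    simp only [hQdef, slac, cond0]
    have h1 : H ∩ E ∩ (Hᶜᶜ ∩ E) = E ∩ H := by ext x; simp only [mem_inter_iff, mem_compl_iff, mem_empty_iff_false, iff_false, not_and]; tauto
    have h2 : H ∩ Eᶜ ∩ (Hᶜᶜ ∩ E) = ∅ := by ext x; simp only [mem_inter_iff, mem_compl_iff, mem_empty_iff_false, iff_false, not_and]; tauto
    have h3 : Hᶜ ∩ (Hᶜᶜ ∩ E) = ∅ := by ext x; simp only [mem_inter_iff, mem_compl_iff, mem_empty_iff_false, iff_false, not_and]; tauto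
    rw [h1, h2, h3, hpr0]; ring
  have hc1 : cond0 Q E Hᶜ = pr P (E ∩ Hᶜ) / pr P Hᶜ := by
    rw [cond0, hQEHc, hQHc]
  have hHc : pr P Hᶜ = 1 - pr P H := by linarith
  simp only [slac, hQ1, hQ2, hQ3, hc1, hHc]
  have ha : pr P (E ∩ H) ≠ 0 := ne_of_gt hEH
  have hc : pr P (E ∩ Hᶜ) ≠ 0 := ne_of_gt hEHc
  have hh : pr P H ≠ 0 := ne_of_gt hpH
  have hhc : (1 : ℝ) - pr P H ≠ 0 := by rw [← hHc]; exact ne_of_gt hpHc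
  field_simp
  ring
end

section
/- Let P be a probability measure on a measurable space Ω and let E, H be measurable events with P(E ∩ H) > 0, P(Eᶜ ∩ H) > 0, P(E ∩ Hᶜ) > 0 and P(Eᶜ ∩ Hᶜ) > 0. Let l, l′ be real numbers with 0 < l ≤ 1 and 0 < l′ ≤ 1, set r = l / l′, let Q_l be the single-likelihood Adams conditioning of P at (l, E, H), and let R be the single-likelihood Adams conditioning of the set function Q_l at (l′, E, Hᶜ). Then Bayesian conditioning of R on E gives the posterior probability of H: R⁰(H|E) = r·P(H) / (1 + (r − 1)·P(H)). -/
open MeasureTheory Set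

variable {Ω : Type*} [MeasurableSpace Ω]

theorem stmt_8 (P : MeasureTheory.Measure Ω) [IsProbabilityMeasure P]
    (E H : Set Ω) (hE : MeasurableSet E) (hH : MeasurableSet H)
    (hEH : 0 < pr P (E ∩ H)) (hEcH : 0 < pr P (Eᶜ ∩ H))
    (hEHc : 0 < pr P (E ∩ Hᶜ)) (hEcHc : 0 < pr P (Eᶜ ∩ Hᶜ))
    (l l' : ℝ) (hl0 : 0 < l) (hl1 : l ≤ 1) (hl'0 : 0 < l') (hl'1 : l' ≤ 1)
    (r : ℝ) (hr : r = l / l') :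
    cond0 (slac (slac (pr P) l E H) l' E Hᶜ) H E =
      r * pr P H / (1 + (r - 1) * pr P H) := by
  have hadd : ∀ A B : Set Ω, MeasurableSet A → pr P B = pr P (A ∩ B) + pr P (Aᶜ ∩ B) := by
    intro A B hA
    have h1 : P (B ∩ A) + P (B \ A) = P B := measure_inter_add_diff B hA
    have h2 : (P B).toReal = (P (B ∩ A)).toReal + (P (B \ A)).toReal := by
      rw [← ENNReal.toReal_add (measure_ne_top P _) (measure_ne_top P _), h1]
    simpa [pr, Set.inter_comm, Set.diff_eq] using h2
  -- basic quantities
  set a := pr P (E ∩ H) with ha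
  set b := pr P (Eᶜ ∩ H) with hb
  set c := pr P (E ∩ Hᶜ) with hc
  set d := pr P (Eᶜ ∩ Hᶜ) with hd
  have hpH : pr P H = a + b := hadd E H hE
  have hpHc : pr P Hᶜ = c + d := hadd E Hᶜ hE
  have hsum : pr P H + pr P Hᶜ = 1 := by
    have := hadd H univ hH
    simpa [pr, Set.inter_univ] using this.symm
  have hpHpos : 0 < pr P H := by rw [hpH]; linarith
  have hpHcpos : 0 < pr P Hᶜ := by rw [hpHc]; linarith
  have hpempty : pr P (∅ : Set Ω) = 0 := by simp [pr]
  set Q := slac (pr P) l E H with hQ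
  -- values of Q
  have hQempty : Q ∅ = 0 := by
    simp [hQ, slac, hpempty]
  have hQEHc : Q (E ∩ Hᶜ) = c := by
    have e1 : H ∩ E ∩ (E ∩ Hᶜ) = ∅ := by
      ext x; simp [Set.mem_inter_iff] <;> tauto
    have e2 : H ∩ Eᶜ ∩ (E ∩ Hᶜ) = ∅ := by
      ext x; simp [Set.mem_inter_iff] <;> tauto
    have e3 : Hᶜ ∩ (E ∩ Hᶜ) = E ∩ Hᶜ := by
      ext x; simp [Set.mem_inter_iff] <;> tauto
    simp [hQ, slac, e1, e2, e3, hpempty, ← hc]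
  have hQHc : Q Hᶜ = c + d := by
    have e1 : H ∩ E ∩ Hᶜ = ∅ := by ext x; simp [Set.mem_inter_iff] <;> tauto
    have e2 : H ∩ Eᶜ ∩ Hᶜ = ∅ := by ext x; simp [Set.mem_inter_iff] <;> tauto
    have e3 : Hᶜ ∩ Hᶜ = Hᶜ := Set.inter_self _
    simp [hQ, slac, e1, e2, e3, hpempty, hpHc]
  have hQHE : Q (H ∩ E) = l * (a + b) := by
    have e1 : H ∩ E ∩ (H ∩ E) = H ∩ E := Set.inter_self _
    have e2 : H ∩ Eᶜ ∩ (H ∩ E) = ∅ := by ext x; simp [Set.mem_inter_iff] <;> tauto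
    have e3 : Hᶜ ∩ (H ∩ E) = ∅ := by ext x; simp [Set.mem_inter_iff] <;> tauto
    have e4 : pr P (H ∩ E) = a := by rw [ha, Set.inter_comm]
    have hcond : cond0 (pr P) E H = a / (a + b) := by
      rw [cond0, hpH, ← ha]
    rw [hQ]
    show pr P (H ∩ E ∩ (H ∩ E)) * (l / cond0 (pr P) E H)
      + pr P (H ∩ Eᶜ ∩ (H ∩ E)) * ((1 - l) / cond0 (pr P) Eᶜ H)
      + pr P (Hᶜ ∩ (H ∩ E)) = l * (a + b)
    rw [e1, e2, e3, e4, hpempty, hcond]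
    have hane : a ≠ 0 := ne_of_gt hEH
    have habne : a + b ≠ 0 := by positivity
    field_simp
    ring
  -- conditional of Q on Hᶜ
  have hcondQ : cond0 Q E Hᶜ = c / (c + d) := by
    rw [cond0, hQEHc, hQHc]
  -- now the outer slac
  have e1 : Hᶜ ∩ E ∩ (H ∩ E) = ∅ := by ext x; simp [Set.mem_inter_iff] <;> tauto
  have e2 : Hᶜ ∩ Eᶜ ∩ (H ∩ E) = ∅ := by ext x; simp [Set.mem_inter_iff] <;> tauto
  have e3 : Hᶜᶜ ∩ (H ∩ E) = H ∩ E := by ext x; simp [Set.mem_inter_iff] <;> tauto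
  have e4 : Hᶜ ∩ E ∩ E = E ∩ Hᶜ := by ext x; simp [Set.mem_inter_iff] <;> tauto
  have e5 : Hᶜ ∩ Eᶜ ∩ E = ∅ := by ext x; simp [Set.mem_inter_iff] <;> tauto
  have e6 : Hᶜᶜ ∩ E = H ∩ E := by ext x; simp [Set.mem_inter_iff] <;> tauto
  have hRnum : slac Q l' E Hᶜ (H ∩ E) = l * (a + b) := by
    show Q (Hᶜ ∩ E ∩ (H ∩ E)) * (l' / cond0 Q E Hᶜ)
      + Q (Hᶜ ∩ Eᶜ ∩ (H ∩ E)) * ((1 - l') / cond0 Q Eᶜ Hᶜ)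
      + Q (Hᶜᶜ ∩ (H ∩ E)) = l * (a + b)
    rw [e1, e2, e3, hQempty, hQHE]; ring
  have hRden : slac Q l' E Hᶜ E = l' * (c + d) + l * (a + b) := by
    show Q (Hᶜ ∩ E ∩ E) * (l' / cond0 Q E Hᶜ)
      + Q (Hᶜ ∩ Eᶜ ∩ E) * ((1 - l') / cond0 Q Eᶜ Hᶜ)
      + Q (Hᶜᶜ ∩ E) = l' * (c + d) + l * (a + b)
    rw [e4, e5, e6, hQempty, hQEHc, hQHE, hcondQ]
    have hcne : c ≠ 0 := ne_of_gt hEHc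
    have hcdne : c + d ≠ 0 := by positivity
    field_simp
    ring
  rw [cond0, hRnum, hRden, hpH, hr]
  have h1 : (1 : ℝ) = (a + b) + (c + d) := by rw [← hpH, ← hpHc, hsum]
  have hD2 : 1 + (l / l' - 1) * (a + b) = (c + d) + (l / l') * (a + b) := by
    linear_combination h1
  have habpos : (0:ℝ) < a + b := by linarith
  have hcdpos : (0:ℝ) < c + d := by linarith
  have hD1ne : l' * (c + d) + l * (a + b) ≠ 0 := by positivity
  have hD2ne : 1 + (l / l' - 1) * (a + b) ≠ 0 := by
    rw [hD2]; positivity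
  rw [div_eq_div_iff hD1ne hD2ne, hD2]
  have hl'ne : l' ≠ 0 := ne_of_gt hl'0
  field_simp
end

section
/- Let P be a probability measure on a measurable space Ω and let E, H be measurable events with P(E ∩ H) > 0, P(Eᶜ ∩ H) > 0, P(E ∩ Hᶜ) > 0 and P(Eᶜ ∩ Hᶜ) > 0. For any real numbers l, l′, the double-likelihood Adams conditioning Q_{l,l′} of P at (l, l′, E, H) satisfies Q_{l,l′}⁰(E|H) = l. -/
open MeasureTheory Set

variable {Ω : Type*} [MeasurableSpace Ω]

theorem stmt_9 (P : MeasureTheory.Measure Ω) [IsProbabilityMeasure P]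
    (E H : Set Ω) (hE : MeasurableSet E) (hH : MeasurableSet H)
    (hEH : 0 < pr P (E ∩ H)) (hEcH : 0 < pr P (Eᶜ ∩ H))
    (hEHc : 0 < pr P (E ∩ Hᶜ)) (hEcHc : 0 < pr P (Eᶜ ∩ Hᶜ)) (l l' : ℝ) :
    cond0 (dlac (pr P) l l' E H) E H = l := by
  have hPH : 0 < pr P H :=
    lt_of_lt_of_le hEH (ENNReal.toReal_mono (measure_ne_top P H)
      (measure_mono inter_subset_right))
  have hempty : pr P (∅ : Set Ω) = 0 := by simp [pr]
  unfold cond0 dlac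
  rw [show H ∩ E ∩ (E ∩ H) = E ∩ H from by ext x; simp; tauto,
      show H ∩ Eᶜ ∩ (E ∩ H) = ∅ from by ext x; simp; tauto,
      show Hᶜ ∩ E ∩ (E ∩ H) = ∅ from by ext x; simp; tauto,
      show Hᶜ ∩ Eᶜ ∩ (E ∩ H) = ∅ from by ext x; simp; tauto,
      show H ∩ E ∩ H = E ∩ H from by ext x; simp; tauto,
      show H ∩ Eᶜ ∩ H = Eᶜ ∩ H from by ext x; simp; tauto,
      show Hᶜ ∩ E ∩ H = ∅ from by ext x; simp; tauto,
      show Hᶜ ∩ Eᶜ ∩ H = ∅ from by ext x; simp; tauto,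
      hempty]
  simp only [cond0]
  have h1 : pr P (E ∩ H) * (l / (pr P (E ∩ H) / pr P H)) = l * pr P H := by
    field_simp
  have h2 : pr P (Eᶜ ∩ H) * ((1 - l) / (pr P (Eᶜ ∩ H) / pr P H)) = (1 - l) * pr P H := by
    field_simp
  rw [h1, h2]
  have : l * pr P H + (1 - l) * pr P H = pr P H := by ring
  simp only [zero_mul, add_zero, this]
  field_simp
end

section
/- Let P be a probability measure on a measurable space Ω and let E, H be measurable events with P(E ∩ H) > 0, P(Eᶜ ∩ H) > 0, P(E ∩ Hᶜ) > 0 and P(Eᶜ ∩ Hᶜ) > 0. For any real numbers l, l′, the double-likelihood Adams conditioning Q_{l,l′} of P at (l, l′, E, H) satisfies Q_{l,l′}⁰(E|Hᶜ) = l′. -/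
open MeasureTheory Set

variable {Ω : Type*} [MeasurableSpace Ω]

theorem stmt_10 (P : MeasureTheory.Measure Ω) [IsProbabilityMeasure P]
    (E H : Set Ω) (hE : MeasurableSet E) (hH : MeasurableSet H)
    (hEH : 0 < pr P (E ∩ H)) (hEcH : 0 < pr P (Eᶜ ∩ H))
    (hEHc : 0 < pr P (E ∩ Hᶜ)) (hEcHc : 0 < pr P (Eᶜ ∩ Hᶜ)) (l l' : ℝ) :
    cond0 (dlac (pr P) l l' E H) E Hᶜ = l' := by

  have hmono : ∀ A B : Set Ω, A ⊆ B → pr P A ≤ pr P B := by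
    intro A B hAB
    exact ENNReal.toReal_mono (measure_ne_top P B) (measure_mono hAB)
  have hHc : 0 < pr P Hᶜ := lt_of_lt_of_le hEHc (hmono _ _ inter_subset_right)
  have e1 : H ∩ E ∩ (E ∩ Hᶜ) = ∅ := by ext x; simp; tauto
  have e2 : H ∩ Eᶜ ∩ (E ∩ Hᶜ) = ∅ := by ext x; simp; tauto
  have e3 : Hᶜ ∩ E ∩ (E ∩ Hᶜ) = E ∩ Hᶜ := by ext x; simp; tauto
  have e4 : Hᶜ ∩ Eᶜ ∩ (E ∩ Hᶜ) = ∅ := by ext x; simp; tauto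
  have e5 : H ∩ E ∩ Hᶜ = ∅ := by ext x; simp; tauto
  have e6 : H ∩ Eᶜ ∩ Hᶜ = ∅ := by ext x; simp; tauto
  have e7 : Hᶜ ∩ E ∩ Hᶜ = E ∩ Hᶜ := by ext x; simp; tauto
  have e8 : Hᶜ ∩ Eᶜ ∩ Hᶜ = Eᶜ ∩ Hᶜ := by ext x; simp; tauto
  have h0 : pr P (∅ : Set Ω) = 0 := by simp [pr]
  simp only [cond0, dlac, e1, e2, e3, e4, e5, e6, e7, e8, h0, zero_mul, zero_add, add_zero]
  rw [div_div_eq_mul_div, div_div_eq_mul_div]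
  field_simp
  ring
end

section
/- Let P be a probability measure on a measurable space Ω and let E, H be measurable events with P(E ∩ H) > 0, P(Eᶜ ∩ H) > 0, P(E ∩ Hᶜ) > 0 and P(Eᶜ ∩ Hᶜ) > 0. Let l, l′ be real numbers with 0 < l ≤ 1 and 0 < l′ ≤ 1 and set r = l / l′. Then Bayesian conditioning on E of the double-likelihood Adams conditioning Q_{l,l′} of P at (l, l′, E, H) satisfies, for every measurable set x, Q_{l,l′}⁰(x|E) = (r·P⁰(x|H ∩ E)·P(H) + P⁰(x|Hᶜ ∩ E)·P(Hᶜ)) / (r·P(H) + P(Hᶜ)). -/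
open MeasureTheory Set

variable {Ω : Type*} [MeasurableSpace Ω]

theorem stmt_12 (P : MeasureTheory.Measure Ω) [IsProbabilityMeasure P]
    (E H : Set Ω) (hE : MeasurableSet E) (hH : MeasurableSet H)
    (hEH : 0 < pr P (E ∩ H)) (hEcH : 0 < pr P (Eᶜ ∩ H))
    (hEHc : 0 < pr P (E ∩ Hᶜ)) (hEcHc : 0 < pr P (Eᶜ ∩ Hᶜ))
    (l l' : ℝ) (hl0 : 0 < l) (hl1 : l ≤ 1) (hl'0 : 0 < l') (hl'1 : l' ≤ 1)
    (r : ℝ) (hr : r = l / l') :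
    ∀ x : Set Ω, MeasurableSet x →
      cond0 (dlac (pr P) l l' E H) x E =
        (r * cond0 (pr P) x (H ∩ E) * pr P H + cond0 (pr P) x (Hᶜ ∩ E) * pr P Hᶜ) /
          (r * pr P H + pr P Hᶜ) := by
  intro x hx
  have pmono : ∀ {A B : Set Ω}, A ⊆ B → pr P A ≤ pr P B := fun h =>
    ENNReal.toReal_mono (measure_ne_top P _) (measure_mono h)
  have hH0 : 0 < pr P H := lt_of_lt_of_le hEH (pmono inter_subset_right)
  have hHc0 : 0 < pr P Hᶜ := lt_of_lt_of_le hEHc (pmono inter_subset_right)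
  have hpr0 : pr P (∅ : Set Ω) = 0 := by simp [pr]
  have e1 : H ∩ E ∩ (x ∩ E) = H ∩ E ∩ x := by ext ω; simp only [mem_inter_iff]; tauto
  have e2 : H ∩ Eᶜ ∩ (x ∩ E) = (∅ : Set Ω) := by
    ext ω; simp only [mem_inter_iff, mem_compl_iff, mem_empty_iff_false]; tauto
  have e3 : Hᶜ ∩ E ∩ (x ∩ E) = Hᶜ ∩ E ∩ x := by ext ω; simp only [mem_inter_iff]; tauto
  have e4 : Hᶜ ∩ Eᶜ ∩ (x ∩ E) = (∅ : Set Ω) := by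
    ext ω; simp only [mem_inter_iff, mem_compl_iff, mem_empty_iff_false]; tauto
  have e5 : H ∩ E ∩ E = E ∩ H := by ext ω; simp only [mem_inter_iff]; tauto
  have e6 : H ∩ Eᶜ ∩ E = (∅ : Set Ω) := by
    ext ω; simp only [mem_inter_iff, mem_compl_iff, mem_empty_iff_false]; tauto
  have e7 : Hᶜ ∩ E ∩ E = E ∩ Hᶜ := by ext ω; simp only [mem_inter_iff]; tauto
  have e8 : Hᶜ ∩ Eᶜ ∩ E = (∅ : Set Ω) := by
    ext ω; simp only [mem_inter_iff, mem_compl_iff, mem_empty_iff_false]; tauto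
  have e9 : x ∩ (H ∩ E) = H ∩ E ∩ x := by ext ω; simp only [mem_inter_iff]; tauto
  have e10 : x ∩ (Hᶜ ∩ E) = Hᶜ ∩ E ∩ x := by ext ω; simp only [mem_inter_iff]; tauto
  have e11 : H ∩ E = E ∩ H := inter_comm _ _
  have e12 : Hᶜ ∩ E = E ∩ Hᶜ := inter_comm _ _
  simp only [cond0, dlac, e1, e2, e3, e4, e5, e6, e7, e8, e9, e10, hpr0, zero_mul,
    add_zero, zero_add, hr]
  simp only [e11, e12]
  set A := pr P (E ∩ H) with hA
  set C := pr P (E ∩ Hᶜ) with hC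
  set pH := pr P H
  set pHc := pr P Hᶜ
  set u := pr P (E ∩ H ∩ x)
  set v := pr P (E ∩ Hᶜ ∩ x)
  have hA0 : A ≠ 0 := ne_of_gt hEH
  have hC0 : C ≠ 0 := ne_of_gt hEHc
  have h1 : A * (l / (A / pH)) = l * pH := by
    rw [div_div_eq_mul_div]
    field_simp
  have h2 : C * (l' / (C / pHc)) = l' * pHc := by
    rw [div_div_eq_mul_div]
    field_simp
  rw [h1, h2, div_div_eq_mul_div, div_div_eq_mul_div]
  have hd1 : l * pH + l' * pHc ≠ 0 := by positivity
  have hd2 : l / l' * pH + pHc ≠ 0 := by positivity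
  rw [div_eq_div_iff hd1 hd2]
  field_simp
end

section
/- Let P be a probability measure on a measurable space Ω and let E, H be measurable events with P(E ∩ H) > 0, P(Eᶜ ∩ H) > 0, P(E ∩ Hᶜ) > 0 and P(Eᶜ ∩ Hᶜ) > 0. Let l, l′ be real numbers with 0 < l ≤ 1 and 0 < l′ ≤ 1 and set r = l / l′. Then Bayesian conditioning on E of the double-likelihood Adams conditioning Q_{l,l′} of P at (l, l′, E, H) gives the posterior probability of H: Q_{l,l′}⁰(H|E) = r·P(H) / (1 + (r − 1)·P(H)). -/
open MeasureTheory Set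

variable {Ω : Type*} [MeasurableSpace Ω]

theorem stmt_13 (P : MeasureTheory.Measure Ω) [IsProbabilityMeasure P]
    (E H : Set Ω) (hE : MeasurableSet E) (hH : MeasurableSet H)
    (hEH : 0 < pr P (E ∩ H)) (hEcH : 0 < pr P (Eᶜ ∩ H))
    (hEHc : 0 < pr P (E ∩ Hᶜ)) (hEcHc : 0 < pr P (Eᶜ ∩ Hᶜ))
    (l l' : ℝ) (hl0 : 0 < l) (hl1 : l ≤ 1) (hl'0 : 0 < l') (hl'1 : l' ≤ 1)
    (r : ℝ) (hr : r = l / l') :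
    cond0 (dlac (pr P) l l' E H) H E = r * pr P H / (1 + (r - 1) * pr P H) := by
  have hmono : ∀ A B : Set Ω, A ⊆ B → pr P A ≤ pr P B := fun A B h =>
    ENNReal.toReal_mono (measure_ne_top P B) (measure_mono h)
  have hH0 : 0 < pr P H := lt_of_lt_of_le hEH (hmono _ _ inter_subset_right)
  have hHc0 : 0 < pr P Hᶜ := lt_of_lt_of_le hEHc (hmono _ _ inter_subset_right)
  have hH1 : pr P H ≤ 1 := by
    have := hmono H univ (subset_univ H); simpa [pr] using this
  have hHc : pr P Hᶜ = 1 - pr P H := by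
    unfold pr
    rw [measure_compl hH (measure_ne_top P H), ENNReal.toReal_sub_of_le
      (measure_mono (subset_univ H)) (measure_ne_top P univ)]
    simp
  have e1 : H ∩ E ∩ (H ∩ E) = E ∩ H := by ext x; simp only [Set.mem_inter_iff, Set.mem_compl_iff, Set.mem_empty_iff_false]; tauto
  have e2 : H ∩ Eᶜ ∩ (H ∩ E) = (∅ : Set Ω) := by ext x; simp only [Set.mem_inter_iff, Set.mem_compl_iff, Set.mem_empty_iff_false]; tauto
  have e3 : Hᶜ ∩ E ∩ (H ∩ E) = (∅ : Set Ω) := by ext x; simp only [Set.mem_inter_iff, Set.mem_compl_iff, Set.mem_empty_iff_false]; tauto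
  have e4 : Hᶜ ∩ Eᶜ ∩ (H ∩ E) = (∅ : Set Ω) := by ext x; simp only [Set.mem_inter_iff, Set.mem_compl_iff, Set.mem_empty_iff_false]; tauto
  have f1 : H ∩ E ∩ E = E ∩ H := by ext x; simp only [Set.mem_inter_iff, Set.mem_compl_iff, Set.mem_empty_iff_false]; tauto
  have f2 : H ∩ Eᶜ ∩ E = (∅ : Set Ω) := by ext x; simp only [Set.mem_inter_iff, Set.mem_compl_iff, Set.mem_empty_iff_false]; tauto
  have f3 : Hᶜ ∩ E ∩ E = E ∩ Hᶜ := by ext x; simp only [Set.mem_inter_iff, Set.mem_compl_iff, Set.mem_empty_iff_false]; tauto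
  have f4 : Hᶜ ∩ Eᶜ ∩ E = (∅ : Set Ω) := by ext x; simp only [Set.mem_inter_iff, Set.mem_compl_iff, Set.mem_empty_iff_false]; tauto
  have hpr0 : pr P ∅ = 0 := by simp [pr]
  have key1 : pr P (E ∩ H) * (l / cond0 (pr P) E H) = l * pr P H := by
    unfold cond0
    field_simp
  have key2 : pr P (E ∩ Hᶜ) * (l' / cond0 (pr P) E Hᶜ) = l' * pr P Hᶜ := by
    unfold cond0
    field_simp
  have hden : 0 < l * pr P H + l' * (1 - pr P H) := by
    have h1 : 0 < l * pr P H := mul_pos hl0 hH0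
    have h2 : 0 ≤ l' * (1 - pr P H) := mul_nonneg hl'0.le (by linarith)
    linarith
  unfold cond0 dlac
  rw [e1, e2, e3, e4, f1, f2, f3, f4, hpr0]
  rw [key1, key2, hHc]
  simp only [zero_mul, add_zero, zero_add]
  rw [hr]
  have hl'ne : l' ≠ 0 := ne_of_gt hl'0
  rw [div_eq_div_iff (by linarith) (by
    have : 1 + (l / l' - 1) * pr P H = (l * pr P H + l' * (1 - pr P H)) / l' := by
      field_simp; ring
    rw [this]
    positivity)]
  field_simp
  ring
end

section
/- Global soundness of likelihood ratio transfer: let P be a probability measure on a measurable space Ω and let E, H be measurable events with P(E ∩ H) > 0, P(Eᶜ ∩ H) > 0, P(E ∩ Hᶜ) > 0 and P(Eᶜ ∩ Hᶜ) > 0. Let l₁, l₁′, l₂, l₂′ be real numbers with 0 < l₁ ≤ 1, 0 < l₁′ ≤ 1, 0 < l₂ ≤ 1, 0 < l₂′ ≤ 1 and l₁ / l₁′ = l₂ / l₂′. Then for every measurable set x, the Bayes-conditioned double-likelihood Adams posteriors agree: Q_{l₁,l₁′}⁰(x|E) = Q_{l₂,l₂′}⁰(x|E); that is, the result of double-likelihood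 Adams conditioning followed by Bayesian conditioning on E depends only on the likelihood ratio and not on the chosen decomposition into two likelihoods. -/
open MeasureTheory Set

variable {Ω : Type*} [MeasurableSpace Ω]

theorem stmt_14 (P : MeasureTheory.Measure Ω) [IsProbabilityMeasure P]
    (E H : Set Ω) (hE : MeasurableSet E) (hH : MeasurableSet H)
    (hEH : 0 < pr P (E ∩ H)) (hEcH : 0 < pr P (Eᶜ ∩ H))
    (hEHc : 0 < pr P (E ∩ Hᶜ)) (hEcHc : 0 < pr P (Eᶜ ∩ Hᶜ))
    (l₁ l₁' l₂ l₂' : ℝ)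
    (h₁0 : 0 < l₁) (h₁1 : l₁ ≤ 1) (h₁'0 : 0 < l₁') (h₁'1 : l₁' ≤ 1)
    (h₂0 : 0 < l₂) (h₂1 : l₂ ≤ 1) (h₂'0 : 0 < l₂') (h₂'1 : l₂' ≤ 1)
    (hratio : l₁ / l₁' = l₂ / l₂') :
    ∀ x : Set Ω, MeasurableSet x →
      cond0 (dlac (pr P) l₁ l₁' E H) x E = cond0 (dlac (pr P) l₂ l₂' E H) x E := by
  intro x hx
  set Q := pr P with hQdef
  have hQempty : Q ∅ = 0 := by simp [hQdef, pr]
  have hQmono : ∀ A B : Set Ω, A ⊆ B → Q A ≤ Q B := fun A B hAB =>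
    ENNReal.toReal_mono (measure_ne_top P B) (measure_mono hAB)
  have hm : 0 < Q (E ∩ H) := hEH
  have hn : 0 < Q (E ∩ Hᶜ) := hEHc
  have hp : 0 < Q H := lt_of_lt_of_le hm (hQmono _ _ inter_subset_right)
  have hq : 0 < Q Hᶜ := lt_of_lt_of_le hn (hQmono _ _ inter_subset_right)
  have hs1 : H ∩ E ∩ (x ∩ E) = H ∩ E ∩ x := by ext ω; simp [mem_inter_iff]; tauto
  have hs2 : H ∩ Eᶜ ∩ (x ∩ E) = ∅ := by ext ω; simp [mem_inter_iff]; tauto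
  have hs3 : Hᶜ ∩ E ∩ (x ∩ E) = Hᶜ ∩ E ∩ x := by ext ω; simp [mem_inter_iff]; tauto
  have hs4 : Hᶜ ∩ Eᶜ ∩ (x ∩ E) = ∅ := by ext ω; simp [mem_inter_iff]; tauto
  have hs5 : H ∩ E ∩ E = H ∩ E := by ext ω; simp [mem_inter_iff]
  have hs6 : H ∩ Eᶜ ∩ E = ∅ := by ext ω; simp [mem_inter_iff]
  have hs7 : Hᶜ ∩ E ∩ E = Hᶜ ∩ E := by ext ω; simp [mem_inter_iff]
  have hs8 : Hᶜ ∩ Eᶜ ∩ E = ∅ := by ext ω; simp [mem_inter_iff]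
  have hHE : Q (H ∩ E) = Q (E ∩ H) := by rw [inter_comm]
  have hHcE : Q (Hᶜ ∩ E) = Q (E ∩ Hᶜ) := by rw [inter_comm]
  have key : ∀ l l' : ℝ, cond0 (dlac Q l l' E H) x E =
      (Q (H ∩ E ∩ x) * Q H / Q (E ∩ H) * l + Q (Hᶜ ∩ E ∩ x) * Q Hᶜ / Q (E ∩ Hᶜ) * l')
        / (Q H * l + Q Hᶜ * l') := by
    intro l l'
    simp only [cond0, dlac, hs1, hs2, hs3, hs4, hs5, hs6, hs7, hs8, hQempty, zero_mul, add_zero, zero_add,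
      hHE, hHcE]
    congr 1
    · field_simp
    · field_simp
  rw [key l₁ l₁', key l₂ l₂']
  set a := Q (H ∩ E ∩ x) * Q H / Q (E ∩ H)
  set b := Q (Hᶜ ∩ E ∩ x) * Q Hᶜ / Q (E ∩ Hᶜ)
  have hd1 : 0 < Q H * l₁ + Q Hᶜ * l₁' := by positivity
  have hd2 : 0 < Q H * l₂ + Q Hᶜ * l₂' := by positivity
  rw [div_eq_div_iff (ne_of_gt hd1) (ne_of_gt hd2)]
  have hll : l₁ * l₂' = l₂ * l₁' :=
    (div_eq_div_iff (ne_of_gt h₁'0) (ne_of_gt h₂'0)).mp hratio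
  linear_combination (a * Q Hᶜ - b * Q H) * hll
end

section
/- Equivalence of Adams-then-Bayes with Bayes-then-Jeffrey: let P be a probability measure on a measurable space Ω, let E, H be measurable events with P(E ∩ H) > 0, P(Eᶜ ∩ H) > 0, P(E ∩ Hᶜ) > 0 and P(Eᶜ ∩ Hᶜ) > 0, let l, l′ be real numbers with 0 < l ≤ 1 and 0 < l′ ≤ 1, set r = l / l′ and p̂ = r·P(H) / (1 + (r − 1)·P(H)). Then for every measurable set x, p̂·P⁰(x|H ∩ E) + (1 − p̂)·P⁰(x|Hᶜ ∩ E) = Q_{l,l′}⁰(x|E), and both sides equal (r·P(H)·P⁰(x|H ∩ E) + P(Hᶜ)·P⁰(x|Hᶜ ∩ E)) / (1 + (r − 1)·P(H)); that is, double-likelihood Adams conditioning followed by Bayesian conditioning on E yields the same probability function as Bayesian conditioning on E followed by Jeffrey conditioning on H with parameter p̂. -/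
open MeasureTheory Set

variable {Ω : Type*} [MeasurableSpace Ω]

lemma pr_empty (P : MeasureTheory.Measure Ω) : pr P ∅ = 0 := by simp [pr]

lemma pr_split (P : MeasureTheory.Measure Ω) [IsProbabilityMeasure P] (s t : Set Ω)
    (ht : MeasurableSet t) : pr P s = pr P (s ∩ t) + pr P (s ∩ tᶜ) := by
  unfold pr
  rw [← ENNReal.toReal_add (measure_ne_top _ _) (measure_ne_top _ _)]
  congr 1
  rw [← Set.diff_eq, measure_inter_add_diff s ht]

theorem stmt_15 (P : MeasureTheory.Measure Ω) [IsProbabilityMeasure P]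
    (E H : Set Ω) (hE : MeasurableSet E) (hH : MeasurableSet H)
    (hEH : 0 < pr P (E ∩ H)) (hEcH : 0 < pr P (Eᶜ ∩ H))
    (hEHc : 0 < pr P (E ∩ Hᶜ)) (hEcHc : 0 < pr P (Eᶜ ∩ Hᶜ))
    (l l' : ℝ) (hl0 : 0 < l) (hl1 : l ≤ 1) (hl'0 : 0 < l') (hl'1 : l' ≤ 1)
    (r phat : ℝ) (hr : r = l / l') (hp : phat = r * pr P H / (1 + (r - 1) * pr P H)) :
    ∀ x : Set Ω, MeasurableSet x →
      phat * cond0 (pr P) x (H ∩ E) + (1 - phat) * cond0 (pr P) x (Hᶜ ∩ E) =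
        cond0 (dlac (pr P) l l' E H) x E ∧
      cond0 (dlac (pr P) l l' E H) x E =
        (r * pr P H * cond0 (pr P) x (H ∩ E) + pr P Hᶜ * cond0 (pr P) x (Hᶜ ∩ E)) /
          (1 + (r - 1) * pr P H) := by
  intro x hx
  subst hr; subst hp
  have ha : 0 < pr P (H ∩ E) := by rwa [Set.inter_comm] at hEH
  have hb : 0 < pr P (H ∩ Eᶜ) := by rwa [Set.inter_comm] at hEcH
  have hc : 0 < pr P (Hᶜ ∩ E) := by rwa [Set.inter_comm] at hEHc
  have hd : 0 < pr P (Hᶜ ∩ Eᶜ) := by rwa [Set.inter_comm] at hEcHc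
  set a := pr P (H ∩ E) with ha'
  set b := pr P (H ∩ Eᶜ) with hb'
  set c := pr P (Hᶜ ∩ E) with hc'
  set d := pr P (Hᶜ ∩ Eᶜ) with hd'
  set u := pr P (H ∩ E ∩ x) with hu'
  set v := pr P (Hᶜ ∩ E ∩ x) with hv'
  have hHsplit : pr P H = a + b := pr_split P H E hE
  have hHcsplit : pr P Hᶜ = c + d := pr_split P Hᶜ E hE
  have huniv : pr P (Set.univ : Set Ω) = 1 := by simp [pr]
  have hsum : a + b + c + d = 1 := by
    have h1 := pr_split P (Set.univ : Set Ω) H hH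
    simp only [Set.univ_inter] at h1
    rw [huniv, hHsplit, hHcsplit] at h1
    linarith
  -- pr rewrites for commuted intersections
  have e1 : pr P (E ∩ H) = a := by rw [Set.inter_comm]
  have e2 : pr P (Eᶜ ∩ H) = b := by rw [Set.inter_comm]
  have e3 : pr P (E ∩ Hᶜ) = c := by rw [Set.inter_comm]
  have e4 : pr P (Eᶜ ∩ Hᶜ) = d := by rw [Set.inter_comm]
  have exu : pr P (x ∩ (H ∩ E)) = u := by rw [Set.inter_comm]
  have exv : pr P (x ∩ (Hᶜ ∩ E)) = v := by rw [Set.inter_comm]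
  -- set simplifications
  have s1 : H ∩ E ∩ (x ∩ E) = H ∩ E ∩ x := by
    ext ω; simp only [Set.mem_inter_iff]; tauto
  have s2 : H ∩ Eᶜ ∩ (x ∩ E) = (∅ : Set Ω) := by
    ext ω; simp only [Set.mem_inter_iff, Set.mem_compl_iff, Set.mem_empty_iff_false]; tauto
  have s3 : Hᶜ ∩ E ∩ (x ∩ E) = Hᶜ ∩ E ∩ x := by
    ext ω; simp only [Set.mem_inter_iff]; tauto
  have s4 : Hᶜ ∩ Eᶜ ∩ (x ∩ E) = (∅ : Set Ω) := by
    ext ω; simp only [Set.mem_inter_iff, Set.mem_compl_iff, Set.mem_empty_iff_false]; tauto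
  have t1 : H ∩ E ∩ E = H ∩ E := by rw [Set.inter_assoc, Set.inter_self]
  have t2 : H ∩ Eᶜ ∩ E = (∅ : Set Ω) := by
    ext ω; simp only [Set.mem_inter_iff, Set.mem_compl_iff, Set.mem_empty_iff_false]; tauto
  have t3 : Hᶜ ∩ E ∩ E = Hᶜ ∩ E := by rw [Set.inter_assoc, Set.inter_self]
  have t4 : Hᶜ ∩ Eᶜ ∩ E = (∅ : Set Ω) := by
    ext ω; simp only [Set.mem_inter_iff, Set.mem_compl_iff, Set.mem_empty_iff_false]; tauto
  have hane : a ≠ 0 := ne_of_gt ha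
  have hbne : b ≠ 0 := ne_of_gt hb
  have hcne : c ≠ 0 := ne_of_gt hc
  have hdne : d ≠ 0 := ne_of_gt hd
  have habne : a + b ≠ 0 := by positivity
  have hcdne : c + d ≠ 0 := by positivity
  have hl'ne : l' ≠ 0 := ne_of_gt hl'0
  have hlne : l ≠ 0 := ne_of_gt hl0
  have hQE : dlac (pr P) l l' E H E = l * (a + b) + l' * (c + d) := by
    simp only [dlac, cond0, t1, t2, t3, t4, pr_empty, e1, e3, hHsplit, hHcsplit,
      ← ha', ← hc']
    field_simp
    ring
  have hQx : dlac (pr P) l l' E H (x ∩ E) =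
      u * (l * (a + b) / a) + v * (l' * (c + d) / c) := by
    simp only [dlac, cond0, s1, s2, s3, s4, pr_empty, e1, e3, hHsplit, hHcsplit,
      ← hu', ← hv']
    field_simp
    ring
  have hLpos : 0 < l * (a + b) + l' * (c + d) := by positivity
  have hLne : l * (a + b) + l' * (c + d) ≠ 0 := ne_of_gt hLpos
  have hDpos : 0 < l / l' * (a + b) + (c + d) := by positivity
  have hDne : l / l' * (a + b) + (c + d) ≠ 0 := ne_of_gt hDpos
  have hden : 1 + (l / l' - 1) * (a + b) = l / l' * (a + b) + (c + d) := by
    linear_combination -hsum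
  simp only [cond0, hQE, hQx, exu, exv, hHsplit, hHcsplit, hden, ← ha', ← hc']
  constructor
  · field_simp
    ring
  · field_simp
end

section
/- Prosecutor's conditioning: let P be a probability measure on a measurable space Ω and let E, H, D be measurable events with P(E ∩ H) > 0 and D ⊆ E. Then the single-likelihood Adams conditioning Q₁ of P at (1, E, H) — the posterior belief after learning that the likelihood of E given H equals 1 — satisfies Q₁(H ∩ D) = P(H ∩ D) · P(H) / P(E ∩ H); in particular the posterior probability of H ∩ D is the prior probability multiplied by the factor 1 / P⁰(E|H). -/
open MeasureTheory Set

variable {Ω : Type*} [MeasurableSpace Ω]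

theorem stmt_19 (P : MeasureTheory.Measure Ω) [IsProbabilityMeasure P]
    (E H D : Set Ω) (hE : MeasurableSet E) (hH : MeasurableSet H) (hD : MeasurableSet D)
    (hEH : 0 < pr P (E ∩ H)) (hDE : D ⊆ E) :
    slac (pr P) 1 E H (H ∩ D) = pr P (H ∩ D) * pr P H / pr P (E ∩ H) := by
  have hmono : ∀ A B : Set Ω, A ⊆ B → pr P A ≤ pr P B := by
    intro A B hAB
    exact ENNReal.toReal_mono (measure_ne_top P B) (measure_mono hAB)
  have hH0 : 0 < pr P H := lt_of_lt_of_le hEH (hmono _ _ (inter_subset_right))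
  have h1 : H ∩ E ∩ (H ∩ D) = H ∩ D := by
    ext x; constructor
    · rintro ⟨_, hx⟩; exact hx
    · rintro ⟨hx, hy⟩; exact ⟨⟨hx, hDE hy⟩, hx, hy⟩
  have h2 : Hᶜ ∩ (H ∩ D) = (∅ : Set Ω) := by
    ext x; simp (config := {contextual := true}) [mem_inter_iff]
  have h3 : pr P (∅ : Set Ω) = 0 := by simp [pr]
  have hEH' : pr P (E ∩ H) ≠ 0 := ne_of_gt hEH
  simp only [slac, h1, h2, h3, cond0, sub_self, zero_div, mul_zero, add_zero]
  rw [one_div_div, mul_div_assoc]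
end
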